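/- (Risk consistency of the TF surrogate loss.) Assume (H1): for every i, P({Y = i} ∩ {Ȳ = i} ∩ {S = true}) = P({Ȳ = i} ∩ {S = true}), and (H2): P({Y = Ȳ} ∩ {S = false}) = 0. For a loss vector ℓ : Fin K → ℝ, define the surrogate random variable G : Ω → ℝ by G(ω) = ℓ(Ȳ(ω)) if S(ω) = true, and G(ω) = ∑_{i ≠ Ȳ(ω)} P[{Y = i} | {Ȳ = Ȳ(ω)} ∩ {S = false}] · ℓ(i) if S(ω) = false. Then E[G] = ∑_{i} P({Y = i}) · ℓ(i); that is, the expectation of the True-False surrogate loss equals the ordinary classification risk. -/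

import Mathlib

open MeasureTheory ProbabilityTheory
open scoped ENNReal

theorem stmt_8 {Ω : Type*} [MeasurableSpace Ω] (P : Measure Ω) [IsProbabilityMeasure P]
    {K : ℕ} (hK : 2 ≤ K) (Y Ybar : Ω → Fin K) (S : Ω → Bool)
    (hY : ∀ i : Fin K, MeasurableSet {ω | Y ω = i})
    (hYbar : ∀ i : Fin K, MeasurableSet {ω | Ybar ω = i})
    (hS : ∀ b : Bool, MeasurableSet {ω | S ω = b})
    (H1 : ∀ i : Fin K,
      P ({ω | Y ω = i} ∩ {ω | Ybar ω = i} ∩ {ω | S ω = true})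
        = P ({ω | Ybar ω = i} ∩ {ω | S ω = true}))
    (H2 : P ({ω | Y ω = Ybar ω} ∩ {ω | S ω = false}) = 0) :
    ∀ ℓ : Fin K → ℝ,
      (∫ ω, (if S ω = true then ℓ (Ybar ω)
          else ∑ i ∈ Finset.univ.filter (fun i : Fin K => i ≠ Ybar ω),
            (P[{ω' | Y ω' = i} | {ω' | Ybar ω' = Ybar ω} ∩ {ω' | S ω' = false}]).toReal
              * ℓ i) ∂P)
        = ∑ i : Fin K, (P {ω | Y ω = i}).toReal * ℓ i := by
  intro ℓ
  classical
  set A : Fin K → Bool → Set Ω := fun j b => {ω | Ybar ω = j} ∩ {ω | S ω = b} with hAdef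
  have hA : ∀ (j : Fin K) (b : Bool), MeasurableSet (A j b) :=
    fun j b => (hYbar j).inter (hS b)
  have hfin : ∀ s : Set Ω, P s ≠ ∞ := fun s => (measure_lt_top P s).ne
  set c : Fin K → Bool → ℝ := fun j b =>
    if b = true then ℓ j
    else ∑ i ∈ Finset.univ.filter (fun i : Fin K => i ≠ j),
      (P[{ω' | Y ω' = i} | {ω' | Ybar ω' = j} ∩ {ω' | S ω' = false}]).toReal * ℓ i
    with hc
  -- Step 1: rewrite integrand as a finite sum of indicators
  have hfun : ∀ ω, (if S ω = true then ℓ (Ybar ω)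
      else ∑ i ∈ Finset.univ.filter (fun i : Fin K => i ≠ Ybar ω),
        (P[{ω' | Y ω' = i} | {ω' | Ybar ω' = Ybar ω} ∩ {ω' | S ω' = false}]).toReal * ℓ i)
      = ∑ p : Fin K × Bool,
        Set.indicator (A p.1 p.2) (fun _ => c p.1 p.2) ω := by
    intro ω
    rw [Fintype.sum_eq_single (⟨Ybar ω, S ω⟩ : Fin K × Bool)]
    · have hmem : ω ∈ A (Ybar ω) (S ω) := ⟨rfl, rfl⟩
      rw [Set.indicator_of_mem hmem]
    · intro p hp
      apply Set.indicator_of_notMem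
      intro hmemp
      obtain ⟨h1, h2⟩ := hmemp
      exact hp (Prod.ext h1.symm h2.symm)
  have hint : (∫ ω, (if S ω = true then ℓ (Ybar ω)
      else ∑ i ∈ Finset.univ.filter (fun i : Fin K => i ≠ Ybar ω),
        (P[{ω' | Y ω' = i} | {ω' | Ybar ω' = Ybar ω} ∩ {ω' | S ω' = false}]).toReal
          * ℓ i) ∂P)
      = ∑ p : Fin K × Bool, c p.1 p.2 * (P (A p.1 p.2)).toReal := by
    rw [integral_congr_ae (Filter.Eventually.of_forall hfun)]
    rw [integral_finset_sum _ (fun p _ => (integrable_const (c p.1 p.2)).indicator (hA p.1 p.2))]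
    refine Finset.sum_congr rfl fun p _ => ?_
    rw [integral_indicator_const _ (hA p.1 p.2), smul_eq_mul, mul_comm, measureReal_def]
  rw [hint]
  -- partition over Ybar
  have hpart : ∀ s : Set Ω, MeasurableSet s →
      P s = ∑ j : Fin K, P (s ∩ {ω | Ybar ω = j}) := by
    intro s hs
    rw [← measure_biUnion_finset]
    · congr 1
      ext ω
      simp only [Set.mem_iUnion, Set.mem_inter_iff, Set.mem_setOf_eq]
      constructor
      · intro h; exact ⟨Ybar ω, Finset.mem_univ _, h, rfl⟩
      · rintro ⟨j, -, h, -⟩; exact h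
    · intro i _ j _ hij
      refine Set.disjoint_left.2 ?_
      rintro ω ⟨-, h1⟩ ⟨-, h2⟩
      exact hij (h1.symm.trans h2)
    · intro j _
      exact hs.inter (hYbar j)
  -- Step 2: on {S = true}, Y = j iff Ybar = j (in measure)
  have hnullT : ∀ k : Fin K,
      P (({ω | Ybar ω = k} ∩ {ω | S ω = true}) \ {ω | Y ω = k}) = 0 := by
    intro k
    have h := measure_inter_add_diff (μ := P) ({ω | Ybar ω = k} ∩ {ω | S ω = true}) (hY k)
    have heq : ({ω | Ybar ω = k} ∩ {ω | S ω = true}) ∩ {ω | Y ω = k}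
        = {ω | Y ω = k} ∩ {ω | Ybar ω = k} ∩ {ω | S ω = true} := by
      ext ω; simp only [Set.mem_inter_iff, Set.mem_setOf_eq]; tauto
    rw [heq, H1 k] at h
    have h' : P ({ω | Ybar ω = k} ∩ {ω | S ω = true})
        + P (({ω | Ybar ω = k} ∩ {ω | S ω = true}) \ {ω | Y ω = k})
        = P ({ω | Ybar ω = k} ∩ {ω | S ω = true}) + 0 := by rw [add_zero, h]
    exact (ENNReal.add_right_inj (hfin _)).mp h'
  have hTeq : ∀ j : Fin K,
      P ({ω | Y ω = j} ∩ {ω | S ω = true}) = P (A j true) := by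
    intro j
    rw [hpart ({ω | Y ω = j} ∩ {ω | S ω = true}) ((hY j).inter (hS true))]
    rw [Fintype.sum_eq_single j]
    · have heq : ({ω | Y ω = j} ∩ {ω | S ω = true}) ∩ {ω | Ybar ω = j}
          = {ω | Y ω = j} ∩ {ω | Ybar ω = j} ∩ {ω | S ω = true} := by
        ext ω; simp only [Set.mem_inter_iff, Set.mem_setOf_eq]; tauto
      rw [heq, H1 j]
    · intro k hk
      refine measure_mono_null ?_ (hnullT k)
      rintro ω ⟨⟨hYω, hSω⟩, hBk⟩
      exact ⟨⟨hBk, hSω⟩, fun h => hk (h.symm.trans hYω)⟩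
  -- Step 3: the "false" part, per j
  have hfalse : ∀ j : Fin K, c j false * (P (A j false)).toReal
      = ∑ i ∈ Finset.univ.filter (fun i : Fin K => i ≠ j),
          (P (A j false ∩ {ω | Y ω = i})).toReal * ℓ i := by
    intro j
    have hcj : c j false = ∑ i ∈ Finset.univ.filter (fun i : Fin K => i ≠ j),
        (P[{ω' | Y ω' = i} | A j false]).toReal * ℓ i := by
      simp [hc, hAdef]
    rw [hcj, Finset.sum_mul]
    refine Finset.sum_congr rfl fun i _ => ?_
    rw [cond_apply (hA j false) P]
    by_cases h0 : P (A j false) = 0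
    · have h1 : P (A j false ∩ {ω | Y ω = i}) = 0 :=
        measure_mono_null Set.inter_subset_left h0
      simp [h0, h1]
    · have hne : (P (A j false)).toReal ≠ 0 := ENNReal.toReal_ne_zero.2 ⟨h0, hfin _⟩
      rw [ENNReal.toReal_mul, ENNReal.toReal_inv]
      field_simp
  -- Step 4: per i, sum over j ≠ i of the false pieces
  have hFalseSum : ∀ i : Fin K,
      ∑ j ∈ Finset.univ.filter (fun j : Fin K => i ≠ j),
          P (A j false ∩ {ω | Y ω = i})
        = P ({ω | Y ω = i} ∩ {ω | S ω = false}) := by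
    intro i
    have hz : P (A i false ∩ {ω | Y ω = i}) = 0 := by
      refine measure_mono_null ?_ H2
      rintro ω ⟨⟨h1, h2⟩, h3⟩
      exact ⟨h3.trans h1.symm, h2⟩
    rw [Finset.filter_ne, Finset.sum_erase (f := fun j : Fin K => P (A j false ∩ {ω | Y ω = i})) Finset.univ hz]
    rw [hpart ({ω | Y ω = i} ∩ {ω | S ω = false}) ((hY i).inter (hS false))]
    refine Finset.sum_congr rfl fun j _ => ?_
    congr 1
    ext ω; simp only [Set.mem_inter_iff, Set.mem_setOf_eq, hAdef]; tauto
  -- Step 5: assemble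
  rw [Fintype.sum_prod_type]
  have hb : ∀ j : Fin K, (∑ b : Bool, c j b * (P (A j b)).toReal)
      = ℓ j * (P ({ω | Y ω = j} ∩ {ω | S ω = true})).toReal
        + ∑ i ∈ Finset.univ.filter (fun i : Fin K => i ≠ j),
            (P (A j false ∩ {ω | Y ω = i})).toReal * ℓ i := by
    intro j
    rw [Fintype.sum_bool]
    rw [hfalse j, hTeq j]
    have hct : c j true = ℓ j := by simp [hc]
    rw [hct]
  calc ∑ j : Fin K, ∑ b : Bool, c j b * (P (A j b)).toReal
      = ∑ j : Fin K, (ℓ j * (P ({ω | Y ω = j} ∩ {ω | S ω = true})).toReal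
          + ∑ i ∈ Finset.univ.filter (fun i : Fin K => i ≠ j),
              (P (A j false ∩ {ω | Y ω = i})).toReal * ℓ i) :=
        Finset.sum_congr rfl fun j _ => hb j
    _ = ∑ j : Fin K, ℓ j * (P ({ω | Y ω = j} ∩ {ω | S ω = true})).toReal
        + ∑ j : Fin K, ∑ i ∈ Finset.univ.filter (fun i : Fin K => i ≠ j),
            (P (A j false ∩ {ω | Y ω = i})).toReal * ℓ i := Finset.sum_add_distrib
    _ = ∑ i : Fin K, ℓ i * (P ({ω | Y ω = i} ∩ {ω | S ω = true})).toReal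
        + ∑ i : Fin K, (P ({ω | Y ω = i} ∩ {ω | S ω = false})).toReal * ℓ i := by
        congr 1
        have swap : ∑ j : Fin K, ∑ i ∈ Finset.univ.filter (fun i : Fin K => i ≠ j),
            (P (A j false ∩ {ω | Y ω = i})).toReal * ℓ i
            = ∑ i : Fin K, ∑ j ∈ Finset.univ.filter (fun j : Fin K => i ≠ j),
                (P (A j false ∩ {ω | Y ω = i})).toReal * ℓ i := by
          simp only [Finset.sum_filter]
          exact Finset.sum_comm
        rw [swap]
        refine Finset.sum_congr rfl fun i _ => ?_
        rw [← Finset.sum_mul, ← ENNReal.toReal_sum (fun j _ => hfin _), hFalseSum i]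
    _ = ∑ i : Fin K, (P {ω | Y ω = i}).toReal * ℓ i := by
        rw [← Finset.sum_add_distrib]
        refine Finset.sum_congr rfl fun i _ => ?_
        have hsplit : P ({ω | Y ω = i} ∩ {ω | S ω = true})
            + P ({ω | Y ω = i} ∩ {ω | S ω = false}) = P {ω | Y ω = i} := by
          have h := measure_inter_add_diff (μ := P) {ω | Y ω = i} (hS true)
          have heq : {ω | Y ω = i} \ {ω | S ω = true}
              = {ω | Y ω = i} ∩ {ω | S ω = false} := by
            ext ω
            simp only [Set.mem_diff, Set.mem_inter_iff, Set.mem_setOf_eq,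
              Bool.not_eq_true]
          rw [heq] at h
          exact h
        rw [← hsplit, ENNReal.toReal_add (hfin _) (hfin _)]
        ring
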